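/- Let H = (V,E) be an n-uniform clique, B = {v ∈ V : deg v > |E|/n²}, and let t ∈ {1,…,n}. If some edge e ∈ E satisfies |e ∩ B| ≤ t, then there exists a vertex v with deg v ≥ |E|/(t+1). -/

import Mathlib

theorem big_degree_from_small_intersection {V : Type*} [DecidableEq V] (n t : ℕ)
    (E : Finset (Finset V)) (hne : E.Nonempty)
    (huniform : ∀ e ∈ E, e.card = n)
    (hclique : ∀ e ∈ E, ∀ f ∈ E, (e ∩ f).Nonempty)
    (ht1 : 1 ≤ t) (htn : t ≤ n)
    (e : Finset V) (he : e ∈ E)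
    (heB : (e.filter
      (fun v => ((E.filter (fun f => v ∈ f)).card : ℝ) > (E.card : ℝ) / (n : ℝ) ^ 2)).card ≤ t) :
    ∃ v : V, ((E.filter (fun f => v ∈ f)).card : ℝ) ≥ (E.card : ℝ) / ((t : ℝ) + 1) := by
  classical
  set d : V → ℕ := fun v => (E.filter (fun f => v ∈ f)).card with hd
  have hEpos : 0 < E.card := Finset.card_pos.mpr hne
  have hen : e.card = n := huniform e he
  have hene : e.Nonempty := by
    obtain ⟨v, hv⟩ := hclique e he e he
    exact ⟨v, (Finset.mem_inter.mp hv).1⟩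
  have hnpos : 0 < n := by rw [← hen]; exact Finset.card_pos.mpr hene
  -- sum of degrees over e covers E
  have hsub : E ⊆ e.biUnion (fun v => E.filter (fun f => v ∈ f)) := by
    intro f hf
    obtain ⟨v, hv⟩ := hclique e he f hf
    rw [Finset.mem_inter] at hv
    exact Finset.mem_biUnion.mpr ⟨v, hv.1, Finset.mem_filter.mpr ⟨hf, hv.2⟩⟩
  have hsum : E.card ≤ ∑ v ∈ e, d v :=
    le_trans (Finset.card_le_card hsub) Finset.card_biUnion_le
  have hsumR : (E.card : ℝ) ≤ ∑ v ∈ e, (d v : ℝ) := by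
    push_cast
    exact_mod_cast hsum
  by_cases hcase : n ≤ t + 1
  · -- pigeonhole over all of e
    have h1 : ∑ v ∈ e, ((E.card : ℝ) / n) ≤ ∑ v ∈ e, (d v : ℝ) := by
      rw [Finset.sum_const, hen, nsmul_eq_mul]
      rw [mul_div_cancel₀]
      · exact hsumR
      · exact_mod_cast hnpos.ne'
    obtain ⟨v, hv, hv2⟩ := Finset.exists_le_of_sum_le hene h1
    refine ⟨v, le_trans ?_ hv2⟩
    apply div_le_div_of_nonneg_left (by positivity) (by exact_mod_cast hnpos)
    exact_mod_cast hcase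
  · -- t + 2 ≤ n; use big-degree vertices
    push_neg at hcase
    set B := e.filter (fun v => ((E.filter (fun f => v ∈ f)).card : ℝ) > (E.card : ℝ) / (n : ℝ) ^ 2) with hB
    have hsplit : ∑ v ∈ e, (d v : ℝ) =
        ∑ v ∈ B, (d v : ℝ) + ∑ v ∈ e.filter (fun v => ¬ ((E.filter (fun f => v ∈ f)).card : ℝ) > (E.card : ℝ) / (n : ℝ) ^ 2), (d v : ℝ) :=
      (Finset.sum_filter_add_sum_filter_not e _ _).symm
    have hsmall : ∑ v ∈ e.filter (fun v => ¬ ((E.filter (fun f => v ∈ f)).card : ℝ) > (E.card : ℝ) / (n : ℝ) ^ 2), (d v : ℝ)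
        ≤ (n : ℝ) * ((E.card : ℝ) / (n : ℝ) ^ 2) := by
      calc _ ≤ ∑ _v ∈ e.filter (fun v => ¬ ((E.filter (fun f => v ∈ f)).card : ℝ) > (E.card : ℝ) / (n : ℝ) ^ 2), ((E.card : ℝ) / (n : ℝ) ^ 2) := by
              apply Finset.sum_le_sum
              intro v hv
              have := (Finset.mem_filter.mp hv).2
              push_neg at this
              exact this
        _ ≤ _ := by
              rw [Finset.sum_const, nsmul_eq_mul]
              apply mul_le_mul_of_nonneg_right _ (by positivity)
              have : (e.filter (fun v => ¬ ((E.filter (fun f => v ∈ f)).card : ℝ) > (E.card : ℝ) / (n : ℝ) ^ 2)).card ≤ n := by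
                rw [← hen]; exact Finset.card_le_card (Finset.filter_subset _ _)
              exact_mod_cast this
    have hnR : (1 : ℝ) ≤ (n : ℝ) := by exact_mod_cast hnpos
    have hbigsum : (E.card : ℝ) - (E.card : ℝ) / n ≤ ∑ v ∈ B, (d v : ℝ) := by
      have : (n : ℝ) * ((E.card : ℝ) / (n : ℝ) ^ 2) = (E.card : ℝ) / n := by
        field_simp
      rw [hsplit] at hsumR
      rw [this] at hsmall
      linarith
    have hBpos : 0 < B.card := by
      rcases Nat.eq_zero_or_pos B.card with h0 | h
      · exfalso
        have : B = ∅ := Finset.card_eq_zero.mp h0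
        rw [this, Finset.sum_empty] at hbigsum
        have hE1 : (1 : ℝ) ≤ (E.card : ℝ) := by exact_mod_cast hEpos
        have hn2 : (2 : ℝ) ≤ (n : ℝ) := by
          have : 2 ≤ n := by omega
          exact_mod_cast this
        have : (E.card : ℝ) / n < E.card := by
          rw [div_lt_iff₀ (by linarith)]
          nlinarith
        linarith
      · exact h
    have hBne : B.Nonempty := Finset.card_pos.mp hBpos
    -- pigeonhole over B
    have h2 : ∑ _v ∈ B, ((∑ v ∈ B, (d v : ℝ)) / B.card) ≤ ∑ v ∈ B, (d v : ℝ) := by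
      rw [Finset.sum_const, nsmul_eq_mul, mul_div_cancel₀]
      exact_mod_cast hBpos.ne'
    obtain ⟨v, hv, hv2⟩ := Finset.exists_le_of_sum_le hBne h2
    refine ⟨v, le_trans ?_ hv2⟩
    -- need E.card/(t+1) ≤ (∑ d)/B.card
    have hBt : (B.card : ℝ) ≤ t := by exact_mod_cast heB
    have hBcpos : (0 : ℝ) < B.card := by exact_mod_cast hBpos
    have htpos : (0 : ℝ) < t := by exact_mod_cast ht1
    have hnt : (t : ℝ) + 2 ≤ n := by
      have : t + 2 ≤ n := by omega
      exact_mod_cast this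
    have hEc : (0 : ℝ) ≤ E.card := by positivity
    have key : (E.card : ℝ) / (t + 1) ≤ ((E.card : ℝ) - (E.card : ℝ) / n) / t := by
      rw [div_le_div_iff₀ (by linarith) htpos]
      have hninv : (E.card : ℝ) / n ≤ (E.card : ℝ) / (t + 2) := by
        apply div_le_div_of_nonneg_left hEc (by linarith) hnt
      have expand : ((E.card : ℝ) - (E.card : ℝ) / (t+2)) * (t + 1)
          = (E.card : ℝ) * t + (E.card : ℝ) / (t+2) := by
        field_simp; ring
      have h3 : ((E.card : ℝ) - (E.card : ℝ) / (t+2)) * (t + 1)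
          ≤ ((E.card : ℝ) - (E.card : ℝ) / n) * (t + 1) :=
        mul_le_mul_of_nonneg_right (by linarith) (by linarith)
      have h4 : (0 : ℝ) ≤ (E.card : ℝ) / (t+2) := by positivity
      linarith
    refine le_trans key ?_
    apply div_le_div₀ (by linarith [hbigsum, Finset.sum_nonneg (fun v _ => by positivity : ∀ v ∈ B, (0:ℝ) ≤ (d v : ℝ))]) hbigsum hBcpos hBt
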